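/- Let m ≥ 2, let n ≥ 0 and k ≥ 2 be integers, and let u be an integer with 0 ≤ u < q_k. Then t_α(n;k) = u if and only if (−1)^k n φ ∈ R_k(u) + ℤ. -/

import Mathlib

noncomputable section

/-- Denominators of the convergents of `α = [0; 1, m, 1, m, …]`:
`q_0 = q_1 = 1`, `q_n = m·q_{n-1} + q_{n-2}` for even `n ≥ 2`, and
`q_n = q_{n-1} + q_{n-2}` for odd `n ≥ 3`. -/
def qseq (m : ℕ) : ℕ → ℕ
  | 0 => 1
  | 1 => 1
  | n + 2 => (if n % 2 = 0 then m else 1) * qseq m (n + 1) + qseq m n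

/-- `b` assigns to each natural number `n` its (unique) Ostrowski `α`-digit
sequence for `α = [0; 1, m, 1, m, …]`: `n = ∑ i, b n i · q_i`, `b n 0 = 0`,
even-indexed digits are `≤ 1`, odd-indexed digits are `≤ m`, and if a digit
(of positive index) attains its maximal allowed value then the previous digit
vanishes. -/
def IsOstrowskiDigits (m : ℕ) (b : ℕ → ℕ →₀ ℕ) : Prop :=
  (∀ n : ℕ, ((b n).sum fun i c => c * qseq m i) = n) ∧
  (∀ n : ℕ, b n 0 = 0) ∧
  (∀ n i : ℕ, i % 2 = 0 → b n i ≤ 1) ∧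
  (∀ n i : ℕ, i % 2 = 1 → b n i ≤ m) ∧
  (∀ n i : ℕ, 1 ≤ i → b n i = (if i % 2 = 0 then 1 else m) → b n (i - 1) = 0)

/-- Ostrowski sum of digits `S_α(n)`. -/
def Sα (b : ℕ → ℕ →₀ ℕ) (n : ℕ) : ℕ := (b n).sum fun _ c => c

/-- Truncation `t_α(n; k) = ∑_{0 ≤ i ≤ k-1} b_i(n) q_i`. -/
def tα (m : ℕ) (b : ℕ → ℕ →₀ ℕ) (k n : ℕ) : ℕ :=
  ∑ i ∈ Finset.range k, b n i * qseq m i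

/-- `p_k(u) = (-1)^k u φ` where `φ = (m + 2 + √(m² + 4m))/2`. -/
def pk (m : ℕ) (k : ℕ) (u : ℤ) : ℝ :=
  (-1 : ℝ) ^ k * u * ((m + 2 + Real.sqrt (m ^ 2 + 4 * m)) / 2)

/-- `φ = (m + 2 + √(m² + 4m))/2`. -/
def phi (m : ℕ) : ℝ := (m + 2 + Real.sqrt (m ^ 2 + 4 * m)) / 2

/-- The interval `A_k^{(1)}` (here `k₀ = ⌊k/2⌋`). -/
def A1 (m k : ℕ) : Set ℝ :=
  let d : ℝ := m ^ 2 + 4 * m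
  let φ : ℝ := (m + 2 + Real.sqrt d) / 2
  let k₀ : ℕ := k / 2
  if k % 2 = 0 then
    Set.Ico ((m - Real.sqrt d) / (2 * φ ^ k₀)) (1 / φ ^ k₀)
  else
    Set.Ico (-(1 / φ ^ (k₀ + 1))) ((-m + Real.sqrt d) / (2 * φ ^ k₀))

/-- The interval `A_k^{(2)}` (here `k₀ = ⌊k/2⌋`). -/
def A2 (m k : ℕ) : Set ℝ :=
  let d : ℝ := m ^ 2 + 4 * m
  let φ : ℝ := (m + 2 + Real.sqrt d) / 2
  let k₀ : ℕ := k / 2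
  if k % 2 = 0 then
    Set.Ico ((m - Real.sqrt d) / (2 * φ ^ k₀)) (1 / φ ^ (k₀ + 1))
  else
    Set.Ico (-(1 / φ ^ (k₀ + 1))) ((-m - 1 + Real.sqrt d) / φ ^ k₀)

/-- The set `R_k(u) = p_k(u) + A_k^{(1)}` for `0 ≤ u < q_{k-1}` and
`R_k(u) = p_k(u) + A_k^{(2)}` for `q_{k-1} ≤ u < q_k`. -/
def Rk (m k : ℕ) (u : ℕ) : Set ℝ :=
  (fun x => pk m k u + x) '' (if u < qseq m (k - 1) then A1 m k else A2 m k)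

namespace OstAux

/-- `α = φ - (m+1)` -/
def al (m : ℕ) : ℝ := phi m - (m + 1)

/-- `ψ = 1/φ = (m+2) - φ` -/
def ps (m : ℕ) : ℝ := (m + 2) - phi m

variable {m : ℕ}

lemma d_nonneg (m : ℕ) : (0:ℝ) ≤ (m:ℝ)^2 + 4*m := by positivity

lemma sqrt_eq (m : ℕ) : Real.sqrt ((m:ℝ)^2 + 4*m) = 2 * phi m - (m+2) := by
  unfold phi; ring

lemma sqrt_lb (hm : 2 ≤ m) : (m:ℝ) < Real.sqrt ((m:ℝ)^2+4*m) := by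
  have h2 : (2:ℝ) ≤ m := by exact_mod_cast hm
  rw [Real.lt_sqrt (by positivity)]
  nlinarith

lemma sqrt_ub (hm : 2 ≤ m) : Real.sqrt ((m:ℝ)^2+4*m) < (m:ℝ) + 2 := by
  have h2 : (2:ℝ) ≤ m := by exact_mod_cast hm
  rw [Real.sqrt_lt' (by positivity)]
  nlinarith

lemma phi_lb (hm : 2 ≤ m) : (m:ℝ) + 1 < phi m := by
  have := sqrt_lb hm; unfold phi; linarith

lemma phi_ub (hm : 2 ≤ m) : phi m < (m:ℝ) + 2 := by
  have := sqrt_ub hm; unfold phi; linarith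

lemma phi_gt3 (hm : 2 ≤ m) : (3:ℝ) < phi m := by
  have := phi_lb hm
  have h2 : (2:ℝ) ≤ m := by exact_mod_cast hm
  linarith

lemma phi_quad (hm : 2 ≤ m) : phi m ^ 2 = ((m:ℝ)+2) * phi m - 1 := by
  have h := Real.sq_sqrt (d_nonneg m)
  rw [sqrt_eq] at h
  nlinarith [h]

lemma al_add_ps (m : ℕ) : al m + ps m = 1 := by unfold al ps; ring

lemma ps_mul_phi (hm : 2 ≤ m) : ps m * phi m = 1 := by
  have := phi_quad hm; unfold ps; nlinarith

lemma ps_pos (hm : 2 ≤ m) : 0 < ps m := by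
  have := phi_ub hm; unfold ps; linarith

lemma ps_lt_third (hm : 2 ≤ m) : ps m < 1/3 := by
  have h3 := phi_gt3 hm
  have h := ps_mul_phi hm
  have hp := ps_pos hm
  nlinarith

lemma al_pos (hm : 2 ≤ m) : 0 < al m := by
  have := phi_lb hm; unfold al; linarith

lemma al_lt_one (hm : 2 ≤ m) : al m < 1 := by
  have := phi_ub hm; unfold al; linarith

lemma m_mul_ps (hm : 2 ≤ m) : (m:ℝ) * ps m = (1 - ps m)^2 := by
  have hq := phi_quad hm
  unfold ps; nlinarith

lemma phi_eq (m : ℕ) : phi m = (m:ℝ) + 1 + al m := by unfold al; ring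

lemma irr_phi (hm : 2 ≤ m) : Irrational (phi m) := by
  have h1 : Irrational (Real.sqrt ((m^2 + 4*m : ℕ) : ℝ)) := by
    rw [irrational_sqrt_natCast_iff]
    rintro ⟨r, hr⟩
    have h1 : m + 1 < r := by nlinarith
    have h2 : r < m + 2 := by nlinarith
    omega
  have h2 : Irrational (Real.sqrt ((m:ℝ)^2 + 4*m)) := by
    convert h1 using 2; push_cast; ring
  have : phi m = (((m:ℚ)+2):ℝ)/2 + Real.sqrt ((m:ℝ)^2+4*m) * (1/2) := by
    unfold phi; push_cast; ring
  rw [this]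
  have h3 : Irrational (Real.sqrt ((m:ℝ)^2+4*m) * (1/2)) := by
    have := h2.ratCast_mul (q := 1/2) (by norm_num)
    convert this using 1; push_cast; ring
  have := h3.ratCast_add (q := ((m:ℚ)+2)/2)
  convert this using 2
  push_cast; ring

/-- linear independence of 1, φ over ℤ -/
lemma lin_indep (hm : 2 ≤ m) {p q : ℤ} (h : (q:ℝ) * phi m = p) : q = 0 ∧ p = 0 := by
  have hq : q = 0 := by
    by_contra hq
    have : phi m = ((p/q : ℚ) : ℝ) := by
      push_cast
      field_simp
      rw [mul_comm] at h
      exact_mod_cast h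
    exact (irr_phi hm) ⟨_, this.symm⟩
  constructor
  · exact hq
  · subst hq; simpa using h.symm

end OstAux

namespace OstAux

variable {m : ℕ}

def eta (m : ℕ) (i : ℕ) : ℝ :=
  if i % 2 = 0 then al m * ps m ^ (i/2) else -(ps m ^ (i/2 + 1))

lemma eta_even (K : ℕ) : eta m (2*K) = al m * ps m ^ K := by
  unfold eta
  have h1 : (2*K) % 2 = 0 := by omega
  have h2 : (2*K) / 2 = K := by omega
  rw [h1, h2]; simp

lemma eta_odd (K : ℕ) : eta m (2*K+1) = -(ps m ^ (K+1)) := by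
  unfold eta
  have h1 : (2*K+1) % 2 = 1 := by omega
  have h2 : (2*K+1) / 2 = K := by omega
  rw [h2]; simp [h1]

lemma qseq_rec (m n : ℕ) :
    qseq m (n+2) = (if n % 2 = 0 then m else 1) * qseq m (n + 1) + qseq m n := by
  rfl

lemma qseq_zero (m : ℕ) : qseq m 0 = 1 := rfl
lemma qseq_one (m : ℕ) : qseq m 1 = 1 := rfl

lemma qseq_pos (m i : ℕ) : 0 < qseq m i := by
  induction i using Nat.strong_induction_on with
  | _ i ih =>
    match i with
    | 0 => exact Nat.one_pos
    | 1 => exact Nat.one_pos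
    | (n+2) =>
      rw [qseq_rec]
      have := ih n (by omega)
      omega

lemma qseq_le_succ (hm : 2 ≤ m) (i : ℕ) : qseq m i ≤ qseq m (i+1) := by
  match i with
  | 0 => simp [qseq_zero, qseq_one]
  | (n+1) =>
    rw [qseq_rec]
    have h1 := qseq_pos m n
    have h2 := qseq_pos m (n+1)
    have : 1 ≤ (if n % 2 = 0 then m else 1) := by split <;> omega
    nlinarith

lemma qseq_mono (hm : 2 ≤ m) {i j : ℕ} (h : i ≤ j) : qseq m i ≤ qseq m j := by
  induction j with
  | zero => simpa [Nat.le_zero.mp h]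
  | succ j ih =>
    rcases Nat.lt_or_ge i (j+1) with h'|h'
    · exact le_trans (ih (by omega)) (qseq_le_succ hm j)
    · have : i = j + 1 := by omega
      simp [this]

lemma eta_rec (hm : 2 ≤ m) (n : ℕ) :
    eta m (n+2) = (if n % 2 = 0 then (m:ℝ) else 1) * eta m (n + 1) + eta m n := by
  have hps := ps_pos hm
  have hmp := m_mul_ps hm
  have hap := al_add_ps m
  rcases Nat.even_or_odd n with ⟨K, hK⟩ | ⟨K, hK⟩
  · have hn : n = 2*K := by omega
    subst hn
    have e1 : 2*K+2 = 2*(K+1) := by ring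
    rw [e1, eta_even, eta_odd, eta_even]
    have hif : (if (2*K) % 2 = 0 then (m:ℝ) else 1) = m := by
      have : (2*K) % 2 = 0 := by omega
      simp [this]
    rw [hif]
    have hal : al m = 1 - ps m := by linarith
    rw [hal]
    linear_combination (ps m ^ K) * hmp
  · have hn : n = 2*K+1 := by omega
    subst hn
    have e1 : 2*K+1+2 = 2*(K+1)+1 := by ring
    have e2 : 2*K+1+1 = 2*(K+1) := by ring
    rw [e1, e2, eta_odd, eta_even, eta_odd]
    have : (2*K+1) % 2 = 1 := by omega
    simp only [this]; norm_num
    have hal : al m = 1 - ps m := by linarith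
    rw [hal]; ring

lemma qphi (hm : 2 ≤ m) : ∀ i : ℕ, ∃ p : ℤ, (qseq m i : ℝ) * phi m = p + eta m i := by
  have key : ∀ i : ℕ, (∃ p : ℤ, (qseq m i : ℝ) * phi m = p + eta m i) ∧
      (∃ p : ℤ, (qseq m (i+1) : ℝ) * phi m = p + eta m (i+1)) := by
    intro i
    induction i with
    | zero =>
      constructor
      · refine ⟨m+1, ?_⟩
        have : eta m 0 = al m := by
          have := eta_even (m := m) 0; simpa using this
        rw [qseq_zero, this]
        unfold al; push_cast; ring
      · refine ⟨m+2, ?_⟩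
        have : eta m 1 = -(ps m ^ 1) := by
          have := eta_odd (m := m) 0; simpa using this
        rw [qseq_one, this]
        unfold ps; push_cast; ring
    | succ i ih =>
      refine ⟨ih.2, ?_⟩
      obtain ⟨p1, hp1⟩ := ih.1
      obtain ⟨p2, hp2⟩ := ih.2
      refine ⟨(if i % 2 = 0 then (m:ℤ) else 1) * p2 + p1, ?_⟩
      rw [qseq_rec, eta_rec hm]
      split_ifs <;> push_cast <;>
        [linear_combination (m:ℝ) * hp2 + hp1; linear_combination hp2 + hp1]
  exact fun i => (key i).1
end OstAux

namespace OstAux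

variable {m : ℕ} {b : ℕ → ℕ →₀ ℕ}

def maxd (m i : ℕ) : ℕ := if i % 2 = 0 then 1 else m

lemma digit_le (hb : IsOstrowskiDigits m b) (n i : ℕ) : b n i ≤ maxd m i := by
  unfold maxd
  rcases Nat.even_or_odd i with ⟨K,hK⟩|⟨K,hK⟩
  · have h : i % 2 = 0 := by omega
    rw [if_pos h]; exact hb.2.2.1 n i h
  · have h : i % 2 = 1 := by omega
    rw [h]; simp only [one_ne_zero, if_false]; exact hb.2.2.2.1 n i h

lemma maxd_pos (hm : 2 ≤ m) (i : ℕ) : 1 ≤ maxd m i := by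
  unfold maxd; split <;> omega

lemma term_le (hb : IsOstrowskiDigits m b) (n i : ℕ) : b n i * qseq m i ≤ n := by
  conv_rhs => rw [← hb.1 n]
  rcases eq_or_ne (b n i) 0 with h|h
  · simp [h]
  · have hi : i ∈ (b n).support := Finsupp.mem_support_iff.mpr h
    rw [Finsupp.sum]
    exact Finset.single_le_sum (f := fun j => b n j * qseq m j)
      (fun _ _ => Nat.zero_le _) hi

lemma sum_range_lt (hm : 2 ≤ m) (hb : IsOstrowskiDigits m b) (n : ℕ) :
    ∀ j, ∑ i ∈ Finset.range j, b n i * qseq m i < qseq m j := by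
  intro j
  induction j using Nat.strong_induction_on with
  | _ j ih =>
    match j with
    | 0 => simp [qseq_zero]
    | 1 => simp [qseq_one, hb.2.1 n, qseq_zero]
    | (i+2) =>
      rw [Finset.sum_range_succ, qseq_rec]
      have hcoef : maxd m (i+1) = (if i % 2 = 0 then m else 1) := by
        unfold maxd
        rcases Nat.even_or_odd i with ⟨K,hK⟩|⟨K,hK⟩
        · have h1 : (i+1) % 2 = 1 := by omega
          have h2 : i % 2 = 0 := by omega
          rw [h1, h2]; simp
        · have h1 : (i+1) % 2 = 0 := by omega
          have h2 : i % 2 = 1 := by omega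
          rw [h1, h2]; simp
      rcases eq_or_ne (b n (i+1)) (maxd m (i+1)) with hmax|hne
      · have hprev : b n i = 0 := by
          have := hb.2.2.2.2 n (i+1) (by omega)
          simp only [Nat.add_sub_cancel] at this
          exact this (by rw [hmax]; unfold maxd; rfl)
        have hsum : ∑ i' ∈ Finset.range (i+1), b n i' * qseq m i' < qseq m i := by
          rw [Finset.sum_range_succ, hprev]
          simpa using ih i (by omega)
        calc ∑ i' ∈ Finset.range (i+1), b n i' * qseq m i' + b n (i+1) * qseq m (i+1)
            < qseq m i + maxd m (i+1) * qseq m (i+1) := by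
              rw [hmax]; omega
          _ = (if i % 2 = 0 then m else 1) * qseq m (i + 1) + qseq m i := by
              rw [hcoef]; ring
      · have hble : b n (i+1) + 1 ≤ maxd m (i+1) := by
          have := digit_le hb n (i+1); omega
        have hsum := ih (i+1) (by omega)
        have h1 : ∑ i' ∈ Finset.range (i+1), b n i' * qseq m i' + b n (i+1) * qseq m (i+1)
            < (b n (i+1) + 1) * qseq m (i+1) := by
          have := qseq_pos m (i+1); nlinarith
        have h2 : (b n (i+1) + 1) * qseq m (i+1) ≤ maxd m (i+1) * qseq m (i+1) :=
          Nat.mul_le_mul_right _ hble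
        have h3 := qseq_pos m i
        rw [← hcoef]
        omega

lemma digit_zero_of_lt (hm : 2 ≤ m) (hb : IsOstrowskiDigits m b) {n j i : ℕ}
    (h : n < qseq m j) (hij : j ≤ i) : b n i = 0 := by
  by_contra hne
  have h1 : qseq m i ≤ b n i * qseq m i := by
    have : 1 ≤ b n i := Nat.one_le_iff_ne_zero.mpr hne
    nlinarith [qseq_pos m i]
  have h2 := term_le hb n i
  have h3 := qseq_mono hm hij
  omega

lemma eq_sum_range (hb : IsOstrowskiDigits m b) {n N : ℕ}
    (hN : ∀ i, N ≤ i → b n i = 0) :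
    (n : ℕ) = ∑ i ∈ Finset.range N, b n i * qseq m i := by
  conv_lhs => rw [← hb.1 n]
  apply Finsupp.sum_of_support_subset
  · intro i hi
    rw [Finsupp.mem_support_iff] at hi
    rw [Finset.mem_range]
    by_contra hlt
    exact hi (hN i (by omega))
  · intro i _; simp

lemma exists_bound (b : ℕ → ℕ →₀ ℕ) (n k : ℕ) :
    ∃ N, k ≤ N ∧ ∀ i, N ≤ i → b n i = 0 := by
  refine ⟨max k ((b n).support.sup id + 1), le_max_left _ _, fun i hi => ?_⟩
  by_contra hne
  have : i ∈ (b n).support := Finsupp.mem_support_iff.mpr hne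
  have := Finset.le_sup (f := id) this
  simp only [id] at this
  omega

lemma tα_lt (hm : 2 ≤ m) (hb : IsOstrowskiDigits m b) (k n : ℕ) :
    tα m b k n < qseq m k := sum_range_lt hm hb n k

lemma tα_succ (k n : ℕ) : tα m b (k+1) n = tα m b k n + b n k * qseq m k :=
  Finset.sum_range_succ _ _

lemma tα_one (hb : IsOstrowskiDigits m b) (n : ℕ) : tα m b 1 n = 0 := by
  unfold tα
  simp [hb.2.1 n]

lemma tα_lt_iff (hm : 2 ≤ m) (hb : IsOstrowskiDigits m b) (j n : ℕ) :
    tα m b (j+1) n < qseq m j ↔ b n j = 0 := by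
  rw [tα_succ]
  constructor
  · intro h
    by_contra hne
    have h1 : qseq m j ≤ b n j * qseq m j := by
      have : 1 ≤ b n j := Nat.one_le_iff_ne_zero.mpr hne
      nlinarith [qseq_pos m j]
    omega
  · intro h
    rw [h]
    simpa using tα_lt hm hb j n

lemma self_eq_tα (hm : 2 ≤ m) (hb : IsOstrowskiDigits m b) {u N : ℕ}
    (hu : u < qseq m N) : u = tα m b N u :=
  eq_sum_range hb (fun i hi => digit_zero_of_lt hm hb hu hi)

end OstAux

namespace OstAux

variable {m : ℕ} {b : ℕ → ℕ →₀ ℕ}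

/-- tail sum `∑_{j ≤ i < N} b_i(n) η_i` -/
def Tl (m : ℕ) (b : ℕ → ℕ →₀ ℕ) (n j N : ℕ) : ℝ :=
  ∑ i ∈ Finset.Ico j N, (b n i : ℝ) * eta m i

lemma Tl_empty {n j N : ℕ} (h : N ≤ j) : Tl m b n j N = 0 := by
  unfold Tl; rw [Finset.Ico_eq_empty (by omega)]; simp

lemma Tl_peel {n j N : ℕ} (h : j < N) :
    Tl m b n j N = (b n j : ℝ) * eta m j + Tl m b n (j+1) N := by
  unfold Tl; exact Finset.sum_eq_sum_Ico_succ_bot h _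

lemma key_m_al (hm : 2 ≤ m) : ((m:ℝ) + al m) * ps m = al m := by
  have hmp := m_mul_ps hm
  have hap := al_add_ps m
  linear_combination hmp + (ps m - 1) * hap

lemma key_m1_al (hm : 2 ≤ m) : ((m:ℝ) - 1 + al m) * ps m = 2 * al m - 1 := by
  have hmp := m_mul_ps hm
  have hap := al_add_ps m
  linear_combination hmp + (ps m - 2) * hap

lemma al_gt_half (hm : 2 ≤ m) : 1/2 < al m := by
  have := ps_lt_third hm
  have := al_add_ps m
  linarith

lemma tail_bounds_aux (hm : 2 ≤ m) (hb : IsOstrowskiDigits m b) (n : ℕ) :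
    ∀ C j N, N ≤ j + C →
      -(al m * ps m ^ (j/2)) < Tl m b n j N ∧ Tl m b n j N < ps m ^ ((j+1)/2) := by
  have hps := ps_pos hm
  have hal := al_pos hm
  have hap := al_add_ps m
  intro C
  induction C with
  | zero =>
    intro j N h
    rw [Tl_empty (by omega)]
    refine ⟨?_, by positivity⟩
    have := mul_pos hal (pow_pos hps (j/2)); linarith
  | succ C ih =>
    intro j N h
    rcases le_or_gt N j with hNj|hjN
    · rw [Tl_empty hNj]
      refine ⟨?_, by positivity⟩
      have := mul_pos hal (pow_pos hps (j/2)); linarith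
    · rw [Tl_peel hjN]
      obtain ⟨ih1, ih2⟩ := ih (j+1) N (by omega)
      rcases Nat.even_or_odd j with ⟨K,hK⟩|⟨K,hK⟩
      · have hj : j = 2*K := by omega
        subst hj
        rw [show (2*K+1)/2 = K from by omega] at ih1
        rw [show (2*K+1+1)/2 = K+1 from by omega] at ih2
        rw [show (2*K)/2 = K from by omega, show (2*K+1)/2 = K from by omega]
        rw [eta_even]
        have hd0 : (0:ℝ) ≤ (b n (2*K) : ℝ) := by positivity
        have hd1 : (b n (2*K) : ℝ) ≤ 1 := by
          exact_mod_cast hb.2.2.1 n (2*K) (by omega)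
        have hpK := pow_pos hps K
        have hE : (0:ℝ) ≤ al m * ps m ^ K := by positivity
        have ht1 : (0:ℝ) ≤ (b n (2*K) : ℝ) * (al m * ps m ^ K) := mul_nonneg hd0 hE
        have ht2 : (b n (2*K) : ℝ) * (al m * ps m ^ K) ≤ al m * ps m ^ K := by
          have := mul_le_mul_of_nonneg_right hd1 hE; simpa using this
        have hid : al m * ps m ^ K + ps m ^ (K+1) = ps m ^ K := by
          rw [pow_succ]; linear_combination (ps m ^ K) * hap
        exact ⟨by linarith, by linarith⟩
      · have hj : j = 2*K+1 := by omega
        subst hj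
        rw [show (2*K+1+1)/2 = K+1 from by omega] at ih1
        rw [show (2*K+1+1+1)/2 = K+1 from by omega] at ih2
        rw [show (2*K+1)/2 = K from by omega, show (2*K+1+1)/2 = K+1 from by omega]
        rw [eta_odd]
        have hd0 : (0:ℝ) ≤ (b n (2*K+1) : ℝ) := by positivity
        have hd1 : (b n (2*K+1) : ℝ) ≤ m := by
          exact_mod_cast hb.2.2.2.1 n (2*K+1) (by omega)
        have hpK1 := pow_pos hps (K+1)
        have ht1 : (0:ℝ) ≤ (b n (2*K+1) : ℝ) * ps m ^ (K+1) := by positivity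
        have ht2 : (b n (2*K+1) : ℝ) * ps m ^ (K+1) ≤ (m:ℝ) * ps m ^ (K+1) :=
          mul_le_mul_of_nonneg_right hd1 hpK1.le
        have hid : (m:ℝ) * ps m ^ (K+1) + al m * ps m ^ (K+1) = al m * ps m ^ K := by
          rw [pow_succ]; linear_combination (ps m ^ K) * key_m_al hm
        rw [mul_neg]
        exact ⟨by linarith, by linarith⟩

lemma tail_bounds (hm : 2 ≤ m) (hb : IsOstrowskiDigits m b) (n j N : ℕ) :
    -(al m * ps m ^ (j/2)) < Tl m b n j N ∧ Tl m b n j N < ps m ^ ((j+1)/2) :=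
  tail_bounds_aux hm hb n N j N (by omega)

lemma tail_ub_even (hm : 2 ≤ m) (hb : IsOstrowskiDigits m b) {n K N : ℕ}
    (h0 : b n (2*K) = 0) : Tl m b n (2*K) N < ps m ^ (K+1) := by
  have hps := ps_pos hm
  rcases le_or_gt N (2*K) with h|h
  · rw [Tl_empty h]; positivity
  · rw [Tl_peel h, h0]
    simp only [Nat.cast_zero, zero_mul, zero_add]
    have := (tail_bounds hm hb n (2*K+1) N).2
    rwa [show (2*K+1+1)/2 = K+1 from by omega] at this

lemma tail_lb_odd (hm : 2 ≤ m) (hb : IsOstrowskiDigits m b) {n K N : ℕ}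
    (hle : b n (2*K+1) + 1 ≤ m) :
    -((2*al m - 1) * ps m ^ K) < Tl m b n (2*K+1) N := by
  have hps := ps_pos hm
  have hal := al_pos hm
  have h2al : 0 < 2*al m - 1 := by have := al_gt_half hm; linarith
  have hpK := pow_pos hps K
  have hpK1 := pow_pos hps (K+1)
  rcases le_or_gt N (2*K+1) with h|h
  · rw [Tl_empty h]
    have := mul_pos h2al hpK; linarith
  · rw [Tl_peel h, eta_odd]
    have ih1 := (tail_bounds hm hb n (2*K+1+1) N).1
    rw [show (2*K+1+1)/2 = K+1 from by omega] at ih1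
    have hd1 : (b n (2*K+1) : ℝ) ≤ (m:ℝ) - 1 := by
      have : (b n (2*K+1) : ℝ) + 1 ≤ (m:ℝ) := by exact_mod_cast hle
      linarith
    have ht2 : (b n (2*K+1) : ℝ) * ps m ^ (K+1) ≤ ((m:ℝ) - 1) * ps m ^ (K+1) :=
      mul_le_mul_of_nonneg_right hd1 hpK1.le
    have hid : ((m:ℝ) - 1) * ps m ^ (K+1) + al m * ps m ^ (K+1) = (2*al m - 1) * ps m ^ K := by
      rw [pow_succ]; linear_combination (ps m ^ K) * key_m1_al hm
    rw [mul_neg]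
    linarith

end OstAux

namespace OstAux

variable {m : ℕ} {b : ℕ → ℕ →₀ ℕ}

lemma pk_eq (m k : ℕ) (u : ℤ) : pk m k u = (-1:ℝ)^k * u * phi m := rfl

lemma neg_one_pow_even (K : ℕ) : ((-1:ℝ))^(2*K) = 1 := by
  rw [pow_mul]; norm_num

lemma neg_one_pow_odd (K : ℕ) : ((-1:ℝ))^(2*K+1) = -1 := by
  rw [pow_succ, neg_one_pow_even]; norm_num

/-- The forward structure lemma: exact position of `(-1)^k n φ` modulo ℤ. -/
lemma forward (hm : 2 ≤ m) (hb : IsOstrowskiDigits m b) (n k : ℕ) (hk : 1 ≤ k) :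
    ∃ (J : ℤ) (a : ℝ),
      (-1:ℝ)^k * n * phi m - J = pk m k (tα m b k n) + a ∧
      (∀ K, k = 2*K → (-(al m * ps m ^ K) < a ∧ a < ps m ^ K ∧
        (b n (k-1) ≠ 0 → a < ps m ^ (K+1)))) ∧
      (∀ K, k = 2*K+1 → (-(ps m ^ (K+1)) < a ∧ a < al m * ps m ^ K ∧
        (b n (k-1) ≠ 0 → a < (2*al m - 1) * ps m ^ K))) := by
  obtain ⟨N, hkN, hN⟩ := exists_bound b n k
  choose P hP using qphi hm
  refine ⟨(-1)^k * ∑ i ∈ Finset.Ico k N, (b n i : ℤ) * P i, (-1:ℝ)^k * Tl m b n k N, ?_, ?_, ?_⟩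
  · -- the identity
    have hnval : ((n:ℕ):ℝ) = ∑ i ∈ Finset.range N, (b n i : ℝ) * (qseq m i : ℝ) := by
      have := eq_sum_range hb hN
      exact_mod_cast congrArg (Nat.cast : ℕ → ℝ) this
    have htval : ((tα m b k n : ℕ):ℝ) = ∑ i ∈ Finset.range k, (b n i : ℝ) * (qseq m i : ℝ) := by
      unfold tα; push_cast; ring
    have h1 : (n:ℝ) * phi m =
        ∑ i ∈ Finset.range N, (b n i : ℝ) * ((P i : ℝ) + eta m i) := by
      rw [hnval, Finset.sum_mul]
      exact Finset.sum_congr rfl fun i _ => by rw [mul_assoc, hP i]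
    have h2 : ((tα m b k n : ℕ):ℝ) * phi m =
        ∑ i ∈ Finset.range k, (b n i : ℝ) * ((P i : ℝ) + eta m i) := by
      rw [htval, Finset.sum_mul]
      exact Finset.sum_congr rfl fun i _ => by rw [mul_assoc, hP i]
    have hsplit : ∑ i ∈ Finset.range N, (b n i : ℝ) * ((P i : ℝ) + eta m i) =
        ∑ i ∈ Finset.range k, (b n i : ℝ) * ((P i : ℝ) + eta m i) +
        ∑ i ∈ Finset.Ico k N, (b n i : ℝ) * ((P i : ℝ) + eta m i) :=
      (Finset.sum_range_add_sum_Ico _ hkN).symm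
    have hIco : ∑ i ∈ Finset.Ico k N, (b n i : ℝ) * ((P i : ℝ) + eta m i) =
        (∑ i ∈ Finset.Ico k N, (b n i : ℝ) * (P i : ℝ)) + Tl m b n k N := by
      unfold Tl
      rw [← Finset.sum_add_distrib]
      exact Finset.sum_congr rfl fun i _ => by ring
    have hJ : ((((-1:ℤ))^k * ∑ i ∈ Finset.Ico k N, (b n i : ℤ) * P i : ℤ) : ℝ) =
        (-1:ℝ)^k * ∑ i ∈ Finset.Ico k N, (b n i : ℝ) * (P i : ℝ) := by
      push_cast; ring
    rw [pk_eq, hJ]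
    push_cast
    have hmain : (n:ℝ) * phi m = ((tα m b k n : ℕ):ℝ) * phi m +
        (∑ i ∈ Finset.Ico k N, (b n i : ℝ) * (P i : ℝ)) + Tl m b n k N := by
      rw [h1, h2, hsplit, hIco]; ring
    push_cast at hmain
    linear_combination ((-1:ℝ)^k) * hmain
  · -- even bounds
    rintro K rfl
    rw [neg_one_pow_even, one_mul]
    have h1 := tail_bounds hm hb n (2*K) N
    rw [show (2*K)/2 = K from by omega, show (2*K+1)/2 = K from by omega] at h1
    refine ⟨h1.1, h1.2, fun hne => ?_⟩
    have hbk : b n (2*K) = 0 := by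
      have hcon := hb.2.2.2.2 n (2*K) (by omega)
      have hle := hb.2.2.1 n (2*K) (by omega)
      simp only [show (2*K) % 2 = 0 from by omega, if_pos] at hcon
      rcases Nat.lt_or_ge (b n (2*K)) 1 with h|h
      · omega
      · exfalso; exact hne (by simpa using hcon (by omega))
    exact tail_ub_even hm hb hbk
  · -- odd bounds
    rintro K rfl
    rw [neg_one_pow_odd]
    have h1 := tail_bounds hm hb n (2*K+1) N
    rw [show (2*K+1)/2 = K from by omega, show (2*K+1+1)/2 = K+1 from by omega] at h1
    refine ⟨by linarith [h1.2], by linarith [h1.1], fun hne => ?_⟩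
    have hbk : b n (2*K+1) + 1 ≤ m := by
      have hcon := hb.2.2.2.2 n (2*K+1) (by omega)
      have hle := hb.2.2.2.1 n (2*K+1) (by omega)
      simp only [show (2*K+1) % 2 = 1 from by omega] at hcon
      rcases Nat.lt_or_ge (b n (2*K+1)) m with h|h
      · omega
      · exfalso
        refine hne ?_
        have : b n (2*K+1) = m := by omega
        simpa using hcon (by simpa using this)
    have := tail_lb_odd (N := N) hm hb hbk
    linarith

end OstAux

namespace OstAux

variable {m : ℕ} {b : ℕ → ℕ →₀ ℕ}

lemma phi_pos (hm : 2 ≤ m) : 0 < phi m := by linarith [phi_gt3 hm]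

lemma ps_eq_inv (hm : 2 ≤ m) : ps m = (phi m)⁻¹ :=
  eq_inv_of_mul_eq_one_left (ps_mul_phi hm)

lemma one_div_phi_pow (hm : 2 ≤ m) (K : ℕ) : 1 / (phi m) ^ K = ps m ^ K := by
  rw [ps_eq_inv hm, inv_pow, one_div]

lemma A1_even (hm : 2 ≤ m) (K : ℕ) :
    A1 m (2*K) = Set.Ico (-(al m * ps m ^ K)) (ps m ^ K) := by
  have hphi := phi_pos hm
  simp only [A1]
  rw [if_pos (show (2*K) % 2 = 0 from by omega), show (2*K)/2 = K from by omega]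
  have h2 : ((m:ℝ) - Real.sqrt ((m:ℝ)^2 + 4*m)) / (2 * ((↑m + 2 + Real.sqrt (↑m ^ 2 + 4 * ↑m)) / 2) ^ K)
      = -(al m * ps m ^ K) := by
    rw [show ((↑m + 2 + Real.sqrt ((m:ℝ) ^ 2 + 4 * ↑m)) / 2) = phi m from rfl,
      sqrt_eq, ps_eq_inv hm, inv_pow]
    unfold al
    rw [div_eq_iff (by positivity)]
    field_simp
    ring
  rw [h2, show ((↑m + 2 + Real.sqrt ((m:ℝ) ^ 2 + 4 * ↑m)) / 2) = phi m from rfl,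
    one_div_phi_pow hm]

lemma A2_even (hm : 2 ≤ m) (K : ℕ) :
    A2 m (2*K) = Set.Ico (-(al m * ps m ^ K)) (ps m ^ (K+1)) := by
  have hphi := phi_pos hm
  simp only [A2]
  rw [if_pos (show (2*K) % 2 = 0 from by omega), show (2*K)/2 = K from by omega]
  have h2 : ((m:ℝ) - Real.sqrt ((m:ℝ)^2 + 4*m)) / (2 * ((↑m + 2 + Real.sqrt (↑m ^ 2 + 4 * ↑m)) / 2) ^ K)
      = -(al m * ps m ^ K) := by
    rw [show ((↑m + 2 + Real.sqrt ((m:ℝ) ^ 2 + 4 * ↑m)) / 2) = phi m from rfl,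
      sqrt_eq, ps_eq_inv hm, inv_pow]
    unfold al
    rw [div_eq_iff (by positivity)]
    field_simp
    ring
  rw [h2, show ((↑m + 2 + Real.sqrt ((m:ℝ) ^ 2 + 4 * ↑m)) / 2) = phi m from rfl,
    one_div_phi_pow hm]

lemma A1_odd (hm : 2 ≤ m) (K : ℕ) :
    A1 m (2*K+1) = Set.Ico (-(ps m ^ (K+1))) (al m * ps m ^ K) := by
  have hphi := phi_pos hm
  simp only [A1]
  rw [if_neg (show ¬((2*K+1) % 2 = 0) from by omega), show (2*K+1)/2 = K from by omega]
  have h2 : (-(m:ℝ) + Real.sqrt ((m:ℝ)^2 + 4*m)) / (2 * ((↑m + 2 + Real.sqrt (↑m ^ 2 + 4 * ↑m)) / 2) ^ K)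
      = al m * ps m ^ K := by
    rw [show ((↑m + 2 + Real.sqrt ((m:ℝ) ^ 2 + 4 * ↑m)) / 2) = phi m from rfl,
      sqrt_eq, ps_eq_inv hm, inv_pow]
    unfold al
    rw [div_eq_iff (by positivity)]
    field_simp
    ring
  rw [h2, show ((↑m + 2 + Real.sqrt ((m:ℝ) ^ 2 + 4 * ↑m)) / 2) = phi m from rfl,
    one_div_phi_pow hm]

lemma A2_odd (hm : 2 ≤ m) (K : ℕ) :
    A2 m (2*K+1) = Set.Ico (-(ps m ^ (K+1))) ((2*al m - 1) * ps m ^ K) := by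
  have hphi := phi_pos hm
  simp only [A2]
  rw [if_neg (show ¬((2*K+1) % 2 = 0) from by omega), show (2*K+1)/2 = K from by omega]
  have h2 : (-(m:ℝ) - 1 + Real.sqrt ((m:ℝ)^2 + 4*m)) / (((↑m + 2 + Real.sqrt (↑m ^ 2 + 4 * ↑m)) / 2) ^ K)
      = (2*al m - 1) * ps m ^ K := by
    rw [show ((↑m + 2 + Real.sqrt ((m:ℝ) ^ 2 + 4 * ↑m)) / 2) = phi m from rfl,
      sqrt_eq, ps_eq_inv hm, inv_pow]
    unfold al
    rw [div_eq_iff (by positivity)]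
    field_simp
    ring
  rw [h2, show ((↑m + 2 + Real.sqrt ((m:ℝ) ^ 2 + 4 * ↑m)) / 2) = phi m from rfl,
    one_div_phi_pow hm]

lemma mem_Rk_iff {z : ℝ} {k u : ℕ} : z ∈ Rk m k u ↔
    z - pk m k u ∈ (if u < qseq m (k-1) then A1 m k else A2 m k) := by
  unfold Rk
  constructor
  · rintro ⟨y, hy, h⟩
    have : z - pk m k u = y := by rw [← h]; ring
    rwa [this]
  · intro h
    exact ⟨z - pk m k u, h, by ring⟩

lemma forward_mem (hm : 2 ≤ m) (hb : IsOstrowskiDigits m b) (n k : ℕ) (hk : 2 ≤ k) :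
    ∃ J : ℤ, (-1:ℝ)^k * n * phi m - J ∈ Rk m k (tα m b k n) := by
  obtain ⟨J, a, hid, heven, hodd⟩ := forward hm hb n k (by omega)
  refine ⟨J, ?_⟩
  rw [mem_Rk_iff]
  have hz : (-1:ℝ)^k * n * phi m - J - pk m k (tα m b k n) = a := by rw [hid]; ring
  rw [hz]
  have hbne : ¬ tα m b k n < qseq m (k-1) → b n (k-1) ≠ 0 := by
    intro h
    have := (tα_lt_iff hm hb (k-1) n)
    rw [show k - 1 + 1 = k from by omega] at this
    intro h0
    exact h (this.mpr h0)
  by_cases hu : tα m b k n < qseq m (k-1)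
  · rw [if_pos hu]
    rcases Nat.even_or_odd k with ⟨K,hK⟩|⟨K,hK⟩
    · have hk2 : k = 2*K := by omega
      obtain ⟨h1, h2, _⟩ := heven K hk2
      rw [hk2, A1_even hm K]
      exact ⟨h1.le, h2⟩
    · have hk2 : k = 2*K+1 := by omega
      obtain ⟨h1, h2, _⟩ := hodd K hk2
      rw [hk2, A1_odd hm K]
      exact ⟨h1.le, h2⟩
  · rw [if_neg hu]
    have hbne' := hbne hu
    rcases Nat.even_or_odd k with ⟨K,hK⟩|⟨K,hK⟩
    · have hk2 : k = 2*K := by omega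
      obtain ⟨h1, _, h3⟩ := heven K hk2
      rw [hk2, A2_even hm K]
      exact ⟨h1.le, h3 hbne'⟩
    · have hk2 : k = 2*K+1 := by omega
      obtain ⟨h1, _, h3⟩ := hodd K hk2
      rw [hk2, A2_odd hm K]
      exact ⟨h1.le, h3 hbne'⟩

end OstAux

namespace OstAux

variable {m : ℕ} {b : ℕ → ℕ →₀ ℕ}

/-- If `(-1)^{k+1} n φ - j` sits exactly at the closed left endpoint
(which equals `(-1)^k η_{k+1}` modulo the `p` shift), we get a contradiction. -/
lemma endpoint_contra (hm : 2 ≤ m) {n u k : ℕ} {j : ℤ} (hu : u < qseq m (k+1))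
    (h : (-1:ℝ)^(k+1) * n * phi m - j = pk m (k+1) u + (-1:ℝ)^k * eta m (k+1)) :
    False := by
  obtain ⟨P, hP⟩ := qphi hm (k+1)
  rw [pk_eq] at h
  rcases Nat.even_or_odd k with ⟨K,hK⟩|⟨K,hK⟩
  · have hk2 : k = 2*K := by omega
    subst hk2
    rw [show 2*K+1 = 2*K+1 from rfl, neg_one_pow_odd, neg_one_pow_even] at h
    have hkey : ((((u:ℤ) - n - qseq m (2*K+1)) : ℤ) : ℝ) * phi m
        = ((((j:ℤ) - P) : ℤ) : ℝ) := by
      push_cast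
      push_cast at h hP
      linear_combination h - hP
    obtain ⟨hw, -⟩ := lin_indep hm hkey
    omega
  · have hk2 : k = 2*K+1 := by omega
    subst hk2
    rw [show 2*K+1+1 = 2*(K+1) from by ring] at h hP hu
    rw [neg_one_pow_odd, neg_one_pow_even] at h
    have hkey : ((((n:ℤ) - u + qseq m (2*(K+1))) : ℤ) : ℝ) * phi m
        = ((((j:ℤ) + P) : ℤ) : ℝ) := by
      push_cast
      push_cast at h hP
      linear_combination h + hP
    obtain ⟨hw, -⟩ := lin_indep hm hkey
    omega

end OstAux

namespace OstAux

variable {m : ℕ} {b : ℕ → ℕ →₀ ℕ}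

lemma psK_succ_le (hm : 2 ≤ m) (K : ℕ) : ps m ^ (K+1) ≤ ps m ^ K := by
  have hps := ps_pos hm
  have h3 := ps_lt_third hm
  rw [pow_succ]
  nlinarith [pow_pos hps K]

set_option maxHeartbeats 1000000 in
lemma containment (hm : 2 ≤ m) (hb : IsOstrowskiDigits m b) {n k u : ℕ} (hk : 2 ≤ k)
    (hu : u < qseq m (k+1)) {j : ℤ}
    (hmem : (-1:ℝ)^(k+1) * n * phi m - j ∈ Rk m (k+1) u) :
    ∃ j' : ℤ, (-1:ℝ)^k * n * phi m - j' ∈ Rk m k (tα m b k u) := by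
  have hps := ps_pos hm
  have hal := al_pos hm
  have hap := al_add_ps m
  have hal1 := al_lt_one hm
  have h2m : (2:ℝ) ≤ m := by exact_mod_cast hm
  have hublt : tα m b k u < qseq m k := tα_lt hm hb k u
  have hdec : u = tα m b k u + b u k * qseq m k := by
    have h1 := self_eq_tα hm hb hu
    rwa [tα_succ] at h1
  have hqk := qseq_pos m k
  have hcond : u < qseq m k ↔ b u k = 0 := by
    constructor
    · intro h
      by_contra hne
      have h1 : qseq m k ≤ b u k * qseq m k := Nat.le_mul_of_pos_left _ (by omega)
      omega
    · intro h
      rw [hdec, h, Nat.zero_mul, Nat.add_zero]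
      exact hublt
  rw [mem_Rk_iff] at hmem
  simp only [Nat.add_sub_cancel] at hmem
  obtain ⟨Pl, hPl⟩ := qphi hm k
  refine ⟨(-1:ℤ)^k * (b u k) * Pl - j, ?_⟩
  rw [mem_Rk_iff]
  have hucast : ((u:ℝ)) = (tα m b k u : ℝ) + (b u k : ℝ) * (qseq m k : ℝ) := by
    exact_mod_cast congrArg (Nat.cast : ℕ → ℝ) hdec
  have hval : (-1:ℝ)^k * n * phi m - (((-1:ℤ)^k * (b u k) * Pl - j : ℤ) : ℝ)
      - pk m k (tα m b k u)
      = (-1:ℝ)^k * (b u k) * eta m k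
        - ((-1:ℝ)^(k+1) * n * phi m - j - pk m (k+1) u) := by
    simp only [pk_eq]
    push_cast
    rw [hucast]
    linear_combination ((-1:ℝ)^k * (b u k : ℝ)) * hPl
  rw [hval]
  -- abbreviation for the old offset
  set a : ℝ := (-1:ℝ)^(k+1) * n * phi m - j - pk m (k+1) u with ha_def
  have hxj : (-1:ℝ)^(k+1) * n * phi m - j = pk m (k+1) u + a := by rw [ha_def]; ring
  rcases Nat.even_or_odd k with ⟨K,hK⟩|⟨K,hK⟩
  · -- k = 2K even, K ≥ 1
    have hk2 : k = 2*K := by omega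
    subst hk2
    have hK1 : 1 ≤ K := by omega
    rw [eta_even, neg_one_pow_even, one_mul]
    have hEndpoint : a = -(ps m ^ (K+1)) → False := by
      intro heq
      refine endpoint_contra (n := n) (j := j) hm hu ?_
      rw [hxj, heq, neg_one_pow_even, one_mul, eta_odd]
    by_cases hc0 : b u (2*K) = 0
    · have hc0' : b u (2*K) = 0 := hc0
      have hu_lt : u < qseq m (2*K) := hcond.mpr hc0'
      rw [if_pos hu_lt, A1_odd hm K] at hmem
      have hstrict : -(ps m ^ (K+1)) < a := by
        rcases eq_or_lt_of_le hmem.1 with heq|h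
        · exact absurd heq.symm (fun hh => hEndpoint hh)
        · exact h
      rw [hc0']
      simp only [Nat.cast_zero, zero_mul, mul_zero, zero_sub]
      -- value = -a ; bounds: -(al ψ^K) ≤ -a ∧ -a < ψ^{K+1} (≤ ψ^K)
      have hup : a < al m * ps m ^ K := hmem.2
      have hps1 := psK_succ_le hm K
      by_cases hw : tα m b (2*K) u < qseq m (2*K - 1)
      · rw [if_pos hw, A1_even hm K]
        exact ⟨by linarith, by linarith⟩
      · rw [if_neg hw, A2_even hm K]
        exact ⟨by linarith, by linarith⟩
    · -- c = 1
      have hc1 : b u (2*K) = 1 := by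
        have := digit_le hb u (2*K)
        unfold maxd at this
        rw [if_pos (show (2*K) % 2 = 0 from by omega)] at this
        omega
      have hu_ge : ¬ u < qseq m (2*K) := fun h => hc0 (hcond.mp h)
      rw [if_neg hu_ge, A2_odd hm K] at hmem
      have hstrict : -(ps m ^ (K+1)) < a := by
        rcases eq_or_lt_of_le hmem.1 with heq|h
        · exact absurd heq.symm (fun hh => hEndpoint hh)
        · exact h
      have hw : tα m b (2*K) u < qseq m (2*K-1) := by
        have hcon := hb.2.2.2.2 u (2*K) (by omega)
        have hprev : b u (2*K - 1) = 0 := by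
          apply hcon
          rw [if_pos (show (2*K) % 2 = 0 from by omega)]
          exact hc1
        have h2 := (tα_lt_iff hm hb (2*K-1) u)
        rw [show 2*K-1+1 = 2*K from by omega] at h2
        exact h2.mpr hprev
      rw [if_pos hw, A1_even hm K, hc1]
      simp only [Nat.cast_one, one_mul]
      -- value = al ψ^K - a;  -(ψ^{K+1}) < a < (2al-1)ψ^K
      have hup : a < (2*al m - 1) * ps m ^ K := hmem.2
      have hpK := pow_pos hps K
      have hid : (al m - 1) * ps m ^ K = -(ps m ^ (K+1)) := by
        rw [pow_succ]; linear_combination (ps m ^ K) * hap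
      exact ⟨by linarith [hpK], by linarith [hid]⟩
  · -- k = 2K+1 odd, K ≥ 1
    have hk2 : k = 2*K+1 := by omega
    subst hk2
    have hK1 : 1 ≤ K := by omega
    rw [eta_odd, neg_one_pow_odd]
    rw [show 2*K+1+1 = 2*(K+1) from by ring] at hmem
    have hpK := pow_pos hps K
    have hpK1 := pow_pos hps (K+1)
    have hpK2 := pow_pos hps (K+2)
    have hpow1 : ps m ^ (K+1) = ps m ^ K * ps m := pow_succ _ _
    have hpow2 : ps m ^ (K+2) = ps m ^ (K+1) * ps m := pow_succ _ _
    have hid1 : ((m:ℝ) - 1 + al m) * ps m ^ (K+1) = (2*al m - 1) * ps m ^ K := by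
      rw [hpow1]; linear_combination (ps m ^ K) * key_m1_al hm
    have hid2 : ((m:ℝ) + al m) * ps m ^ (K+1) = al m * ps m ^ K := by
      rw [hpow1]; linear_combination (ps m ^ K) * key_m_al hm
    have h2al : (2*al m - 1) * ps m ^ K ≤ al m * ps m ^ K := by
      have := mul_le_mul_of_nonneg_right (show 2*al m - 1 ≤ al m by linarith) hpK.le
      linarith [this]
    have hEndpoint : a = -(al m * ps m ^ (K+1)) → False := by
      intro heq
      refine endpoint_contra (n := n) (j := j) hm hu ?_
      rw [hxj, heq, neg_one_pow_odd]
      have heta : eta m (2*K+1+1) = al m * ps m ^ (K+1) := by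
        rw [show 2*K+1+1 = 2*(K+1) from by ring, eta_even]
      rw [heta]
      ring
    have hcd := digit_le hb u (2*K+1)
    have hcdm : b u (2*K+1) ≤ m := by
      unfold maxd at hcd
      rw [if_neg (show ¬((2*K+1) % 2 = 0) from by omega)] at hcd
      exact hcd
    by_cases hc0 : b u (2*K+1) = 0
    · have hu_lt : u < qseq m (2*K+1) := hcond.mpr hc0
      rw [if_pos hu_lt, A1_even hm (K+1)] at hmem
      have hstrict : -(al m * ps m ^ (K+1)) < a := by
        rcases eq_or_lt_of_le hmem.1 with heq|h
        · exact absurd heq.symm (fun hh => hEndpoint hh)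
        · exact h
      have hup : a < ps m ^ (K+1) := hmem.2
      rw [hc0]
      simp only [Nat.cast_zero, zero_mul, mul_zero, neg_zero, zero_sub]
      -- value = -a ∈ [-(ψ^{K+1}), (2al-1)ψ^K) ⊆ [-(ψ^{K+1}), al ψ^K)
      have hb1 : -(ps m ^ (K+1)) ≤ -a := by linarith
      have hmul : (2:ℝ) * ps m ^ (K+1) ≤ (m:ℝ) * ps m ^ (K+1) :=
        mul_le_mul_of_nonneg_right h2m hpK1.le
      have hb2 : -a < (2*al m - 1) * ps m ^ K := by
        linarith [hid1, hmul]
      by_cases hw : tα m b (2*K+1) u < qseq m (2*K+1-1)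
      · rw [if_pos hw, A1_odd hm K]
        exact ⟨hb1, by linarith⟩
      · rw [if_neg hw, A2_odd hm K]
        exact ⟨hb1, hb2⟩
    · have hu_ge : ¬ u < qseq m (2*K+1) := fun h => hc0 (hcond.mp h)
      rw [if_neg hu_ge, A2_even hm (K+1)] at hmem
      have hstrict : -(al m * ps m ^ (K+1)) < a := by
        rcases eq_or_lt_of_le hmem.1 with heq|h
        · exact absurd heq.symm (fun hh => hEndpoint hh)
        · exact h
      have hup : a < ps m ^ (K+2) := hmem.2
      have hcR1 : (1:ℝ) ≤ (b u (2*K+1) : ℝ) := by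
        have : 1 ≤ b u (2*K+1) := by omega
        exact_mod_cast this
      -- lower bound for value, common: value > c ψ^{K+1} - ψ^{K+2} ≥ ψ^{K+1} - ψ^{K+2} > 0
      have hmul1 : ps m ^ (K+1) ≤ (b u (2*K+1) : ℝ) * ps m ^ (K+1) := by
        have := mul_le_mul_of_nonneg_right hcR1 hpK1.le
        simpa using this
      have hlow : -(ps m ^ (K+1)) ≤ -(1:ℝ) * (b u (2*K+1)) * (-(ps m ^ (K+1))) - a := by
        have hs2 := psK_succ_le hm (K+1)
        linarith [hmul1, hup, hs2]
      by_cases hcm : b u (2*K+1) = m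
      · -- maximal digit
        have hw : tα m b (2*K+1) u < qseq m (2*K+1-1) := by
          have hcon := hb.2.2.2.2 u (2*K+1) (by omega)
          have hprev : b u (2*K+1 - 1) = 0 := by
            apply hcon
            rw [if_neg (show ¬((2*K+1) % 2 = 0) from by omega)]
            exact hcm
          have h2 := (tα_lt_iff hm hb (2*K+1-1) u)
          rw [show 2*K+1-1+1 = 2*K+1 from by omega] at h2
          exact h2.mpr hprev
        rw [if_pos hw, A1_odd hm K]
        refine ⟨hlow, ?_⟩
        -- value = m ψ^{K+1} - a < (m+al)ψ^{K+1} = al ψ^K, strict via hstrict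
        rw [hcm]
        have : -(1:ℝ) * (m:ℝ) * (-(ps m ^ (K+1))) = (m:ℝ) * ps m ^ (K+1) := by ring
        linarith [hid2, hstrict, this]
      · -- 1 ≤ c ≤ m-1
        have hcR2 : (b u (2*K+1) : ℝ) ≤ (m:ℝ) - 1 := by
          have : b u (2*K+1) + 1 ≤ m := by omega
          have := (Nat.cast_le (α := ℝ)).mpr this
          push_cast at this
          linarith
        have hmul2 : (b u (2*K+1) : ℝ) * ps m ^ (K+1) ≤ ((m:ℝ) - 1) * ps m ^ (K+1) :=
          mul_le_mul_of_nonneg_right hcR2 hpK1.le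
        have hb2 : -(1:ℝ) * (b u (2*K+1)) * (-(ps m ^ (K+1))) - a < (2*al m - 1) * ps m ^ K := by
          linarith [hmul2, hid1, hstrict]
        by_cases hw : tα m b (2*K+1) u < qseq m (2*K+1-1)
        · rw [if_pos hw, A1_odd hm K]
          exact ⟨hlow, by linarith⟩
        · rw [if_neg hw, A2_odd hm K]
          exact ⟨hlow, hb2⟩

end OstAux

namespace OstAux

variable {m : ℕ} {b : ℕ → ℕ →₀ ℕ}

set_option maxHeartbeats 1000000 in
lemma sibling (hm : 2 ≤ m) (hb : IsOstrowskiDigits m b) {n L u w c : ℕ} (hL : 1 ≤ L)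
    (hdec : u = w + c * qseq m L) (hwlt : w < qseq m L) (hcle : c ≤ maxd m L)
    (ht : tα m b L n = w) {j : ℤ}
    (hmem : (-1:ℝ)^(L+1) * n * phi m - j ∈ Rk m (L+1) u) :
    u = tα m b (L+1) n := by
  have hps := ps_pos hm
  have hal := al_pos hm
  have hap := al_add_ps m
  have hal1 := al_lt_one hm
  have h3 := ps_lt_third hm
  have hqL := qseq_pos m L
  have h2m : (2:ℝ) ≤ m := by exact_mod_cast hm
  have hphipsi : ((m:ℝ) + 1 + al m) * ps m = 1 := by
    have h := ps_mul_phi hm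
    rw [phi_eq] at h
    linear_combination h
  by_contra hne
  have hustar : tα m b (L+1) n = w + b n L * qseq m L := by rw [tα_succ, ht]
  have hcc : c ≠ b n L := by
    intro hcc
    exact hne (by rw [hdec, hcc, ← hustar])
  obtain ⟨J, astar, hid, hev, hod⟩ := forward hm hb n (L+1) (by omega)
  simp only [Nat.add_sub_cancel] at hev hod
  rw [mem_Rk_iff] at hmem
  simp only [Nat.add_sub_cancel] at hmem
  set a : ℝ := (-1:ℝ)^(L+1) * n * phi m - j - pk m (L+1) u with ha_def
  obtain ⟨Pl, hPl⟩ := qphi hm L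
  have hcond : u < qseq m L ↔ c = 0 := by
    constructor
    · intro h
      by_contra hne'
      have h1 : qseq m L ≤ c * qseq m L := Nat.le_mul_of_pos_left _ (by omega)
      omega
    · intro h
      rw [hdec, h, Nat.zero_mul, Nat.add_zero]
      exact hwlt
  set M : ℤ := j - J + (-1:ℤ)^(L+1) * ((c:ℤ) - (b n L : ℤ)) * Pl with hM_def
  have hu1 : ((u:ℝ)) = (w:ℝ) + (c:ℝ) * (qseq m L : ℝ) := by
    exact_mod_cast congrArg (Nat.cast : ℕ → ℝ) hdec
  have hu2 : ((tα m b (L+1) n : ℕ) : ℝ) = (w:ℝ) + (b n L : ℝ) * (qseq m L : ℝ) := by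
    exact_mod_cast congrArg (Nat.cast : ℕ → ℝ) hustar
  have hM : (M:ℝ) = astar - a
      - (-1:ℝ)^(L+1) * ((c:ℝ) - (b n L : ℝ)) * eta m L := by
    rw [ha_def, hM_def]
    simp only [pk_eq] at hid ⊢
    push_cast
    linear_combination hid + ((-1:ℝ)^(L+1) * ((b n L : ℝ) - (c:ℝ))) * hPl
      + (-((-1:ℝ)^(L+1)) * phi m) * hu1 + ((-1:ℝ)^(L+1) * phi m) * hu2
  rcases Nat.even_or_odd L with ⟨K,hK⟩|⟨K,hK⟩
  · -- L = 2K even, K ≥ 1, digits ≤ 1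
    have hL2 : L = 2*K := by omega
    subst hL2
    have hK1 : 1 ≤ K := by omega
    have hcle1 : c ≤ 1 := by
      unfold maxd at hcle
      rwa [if_pos (show (2*K) % 2 = 0 from by omega)] at hcle
    have hd1 : b n (2*K) ≤ 1 := hb.2.2.1 n (2*K) (by omega)
    obtain ⟨hs1, hs2, hs3⟩ := hod K rfl
    rw [neg_one_pow_odd, eta_even] at hM
    have hpK := pow_pos hps K
    have hpK1 := pow_pos hps (K+1)
    have hrel : ps m ^ K - al m * ps m ^ K - ps m ^ (K+1) = 0 := by
      rw [pow_succ]; linear_combination (-(ps m ^ K)) * hap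
    have hψKψ : ps m ^ K ≤ ps m := by
      calc ps m ^ K ≤ ps m ^ 1 := by
            apply pow_le_pow_of_le_one hps.le (by linarith) (by omega)
        _ = ps m := pow_one _
    have halψ : al m * ps m ^ K ≤ al m * ps m :=
      mul_le_mul_of_nonneg_left hψKψ hal.le
    have halψ2 : al m * ps m < ps m := by nlinarith
    interval_cases c
    · -- c = 0, so b n (2K) = 1
      have hd : b n (2*K) = 1 := by omega
      have hu_lt : u < qseq m (2*K) := hcond.mpr rfl
      rw [if_pos hu_lt, A1_odd hm K] at hmem
      have hs3' := hs3 (by omega)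
      -- M = astar - a - al ψ^K ∈ (-1, 0)
      rw [hd] at hM
      have hup : (M:ℝ) < 0 := by
        rw [hM]
        push_cast
        linarith [hmem.1, hs3', hrel]
      have hlo : (-1:ℝ) < M := by
        rw [hM]
        push_cast
        linarith [hmem.2, hs1, hrel, halψ, halψ2]
      have h1 : (0:ℤ) < M + 1 := by exact_mod_cast (by linarith : (0:ℝ) < (M:ℝ) + 1)
      have h2 : M < 0 := by exact_mod_cast hup
      omega
    · -- c = 1, so b n (2K) = 0
      have hd : b n (2*K) = 0 := by omega
      have hu_ge : ¬ u < qseq m (2*K) := fun h => by simpa using hcond.mp h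
      rw [if_neg hu_ge, A2_odd hm K] at hmem
      rw [hd] at hM
      -- M = astar - a + al ψ^K ∈ (0, 1)
      have hlo : (0:ℝ) < M := by
        rw [hM]
        push_cast
        linarith [hmem.2, hs1, hrel]
      have hup : (M:ℝ) < 1 := by
        rw [hM]
        push_cast
        linarith [hmem.1, hs2, hrel, halψ, halψ2, h3]
      have h1 : (0:ℤ) < M := by exact_mod_cast hlo
      have h2 : M < 1 := by exact_mod_cast hup
      omega
  · -- L = 2K+1 odd, digits ≤ m
    have hL2 : L = 2*K+1 := by omega
    subst hL2
    have hclem : c ≤ m := by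
      unfold maxd at hcle
      rwa [if_neg (show ¬((2*K+1) % 2 = 0) from by omega)] at hcle
    have hdm : b n (2*K+1) ≤ m := hb.2.2.2.1 n (2*K+1) (by omega)
    obtain ⟨hs1, hs2, hs3⟩ := hev (K+1) (by ring)
    rw [show 2*K+1+1 = 2*(K+1) from by ring, neg_one_pow_even, eta_odd] at hM
    rw [show 2*K+1+1 = 2*(K+1) from by ring] at hmem
    have hpK := pow_pos hps K
    have hpK1 := pow_pos hps (K+1)
    have hpK2 := pow_pos hps (K+2)
    have hKid : ((m:ℝ) + 1 + al m) * ps m ^ (K+1) = ps m ^ K := by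
      rw [pow_succ]; linear_combination (ps m ^ K) * hphipsi
    have hψK1 : ps m ^ K ≤ 1 := pow_le_one₀ hps.le (by linarith)
    have hrel2 : ps m ^ (K+1) - al m * ps m ^ (K+1) - ps m ^ (K+2) = 0 := by
      rw [show K+2 = (K+1)+1 from rfl, pow_succ]
      linear_combination (-(ps m ^ (K+1))) * hap
    have hs2' : ps m ^ (K+2) ≤ ps m ^ (K+1) := psK_succ_le hm (K+1)
    have hM' : (M:ℝ) = astar - a + ((c:ℝ) - (b n (2*K+1) : ℝ)) * ps m ^ (K+1) := by
      rw [hM]; ring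
    rcases lt_or_gt_of_ne hcc with hlt|hgt
    · -- c < b n L : d ≥ 1, refined bound on astar
      have hd1 : b n (2*K+1) ≠ 0 := by omega
      have hs3' := hs3 hd1
      have hcd1 : ((c:ℝ) - (b n (2*K+1) : ℝ)) ≤ -1 := by
        have : (c:ℤ) - (b n (2*K+1) : ℤ) ≤ -1 := by omega
        exact_mod_cast this
      have hcd2 : -(m:ℝ) ≤ ((c:ℝ) - (b n (2*K+1) : ℝ)) := by
        have : -(m:ℤ) ≤ (c:ℤ) - (b n (2*K+1) : ℤ) := by omega
        exact_mod_cast this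
      have hmul1 : ((c:ℝ) - (b n (2*K+1) : ℝ)) * ps m ^ (K+1) ≤ -ps m ^ (K+1) := by
        have := mul_le_mul_of_nonneg_right hcd1 hpK1.le
        linarith [this]
      have hmul2 : -((m:ℝ) * ps m ^ (K+1)) ≤ ((c:ℝ) - (b n (2*K+1) : ℝ)) * ps m ^ (K+1) := by
        have := mul_le_mul_of_nonneg_right hcd2 hpK1.le
        linarith [this]
      -- bounds on a : a < ψ^{K+1} in both branches, a ≥ -(al ψ^{K+1})
      have ha_bounds : -(al m * ps m ^ (K+1)) ≤ a ∧ a < ps m ^ (K+1) := by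
        by_cases hu_lt : u < qseq m (2*K+1)
        · rw [if_pos hu_lt, A1_even hm (K+1)] at hmem
          exact ⟨hmem.1, hmem.2⟩
        · rw [if_neg hu_lt, A2_even hm (K+1)] at hmem
          exact ⟨hmem.1, lt_of_lt_of_le hmem.2 hs2'⟩
      -- M = astar - a + (c-d) ψ^{K+1} ∈ (-1, 0)
      have hup : (M:ℝ) < 0 := by
        rw [hM']
        linarith [hs3', ha_bounds.1, hmul1, hrel2]
      have hlo : (-1:ℝ) < M := by
        rw [hM']
        linarith [hs1, ha_bounds.2, hmul2, hKid, hψK1]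
      have h1 : (0:ℤ) < M + 1 := by exact_mod_cast (by linarith : (0:ℝ) < (M:ℝ) + 1)
      have h2 : M < 0 := by exact_mod_cast hup
      omega
    · -- c > b n L : c ≥ 1
      have hc1 : 1 ≤ c := by omega
      have hu_ge : ¬ u < qseq m (2*K+1) := by
        intro h
        have := hcond.mp h
        omega
      rw [if_neg hu_ge, A2_even hm (K+1)] at hmem
      have hcd1 : (1:ℝ) ≤ ((c:ℝ) - (b n (2*K+1) : ℝ)) := by
        have : (1:ℤ) ≤ (c:ℤ) - (b n (2*K+1) : ℤ) := by omega
        exact_mod_cast this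
      have hcd2 : ((c:ℝ) - (b n (2*K+1) : ℝ)) ≤ (m:ℝ) := by
        have : (c:ℤ) - (b n (2*K+1) : ℤ) ≤ (m:ℤ) := by omega
        exact_mod_cast this
      have hmul1 : ps m ^ (K+1) ≤ ((c:ℝ) - (b n (2*K+1) : ℝ)) * ps m ^ (K+1) := by
        have := mul_le_mul_of_nonneg_right hcd1 hpK1.le
        linarith [this]
      have hmul2 : ((c:ℝ) - (b n (2*K+1) : ℝ)) * ps m ^ (K+1) ≤ (m:ℝ) * ps m ^ (K+1) := by
        have := mul_le_mul_of_nonneg_right hcd2 hpK1.le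
        linarith [this]
      -- M = astar - a + (c-d) ψ^{K+1} ∈ (0, 1)
      have hlo : (0:ℝ) < M := by
        rw [hM']
        linarith [hs1, hmem.2, hmul1, hrel2]
      have hup : (M:ℝ) < 1 := by
        rw [hM']
        linarith [hs2, hmem.1, hmul2, hKid, hψK1]
      have h1 : (0:ℤ) < M := by exact_mod_cast hlo
      have h2 : M < 1 := by exact_mod_cast hup
      omega

end OstAux

open OstAux in
/-- For `k ≥ 2` and `0 ≤ u < q_k`, `t_α(n;k) = u` iff
`(-1)^k n φ ∈ R_k(u) + ℤ`. -/
theorem truncation_eq_iff (m : ℕ) (hm : 2 ≤ m)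
    (b : ℕ → ℕ →₀ ℕ) (hb : IsOstrowskiDigits m b)
    (n k u : ℕ) (hk : 2 ≤ k) (hu : u < qseq m k) :
    tα m b k n = u ↔ ∃ j : ℤ, (-1 : ℝ) ^ k * n * phi m - j ∈ Rk m k u := by
  have main : ∀ k, 2 ≤ k → ∀ u, u < qseq m k →
      (tα m b k n = u ↔ ∃ j : ℤ, (-1 : ℝ) ^ k * n * phi m - j ∈ Rk m k u) := by
    intro k hk
    induction k, hk using Nat.le_induction with
    | base =>
      intro u hu
      constructor
      · rintro rfl
        exact forward_mem hm hb n 2 (by omega)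
      · rintro ⟨j, hj⟩
        have hdec : u = 0 + b u 1 * qseq m 1 := by
          have h1 := self_eq_tα hm hb hu
          rw [show (2:ℕ) = 1 + 1 from rfl, tα_succ, tα_one hb] at h1
          simpa using h1
        have := sibling hm hb (L := 1) (by omega) hdec (qseq_pos m 1)
          (digit_le hb u 1) (tα_one hb n) hj
        exact this.symm
    | succ k hk2 ih =>
      intro u hu
      constructor
      · rintro rfl
        exact forward_mem hm hb n (k+1) (by omega)
      · rintro ⟨j, hj⟩
        obtain ⟨j', hj'⟩ := containment hm hb hk2 hu hj
        have hteq : tα m b k n = tα m b k u :=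
          (ih (tα m b k u) (tα_lt hm hb k u)).mpr ⟨j', hj'⟩
        have hdec : u = tα m b k u + b u k * qseq m k := by
          have h1 := self_eq_tα hm hb hu
          rwa [tα_succ] at h1
        exact (sibling hm hb (by omega : 1 ≤ k) hdec (tα_lt hm hb k u)
          (digit_le hb u k) hteq hj).symm
  exact main k hk u hu

end
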